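/- Let E be a complex Banach space, A : E → E a bounded linear operator, b, c positive real constants, and define the bounded block operator 𝒜 on E × E by 𝒜(u, v) = (−v, c²·A u + b·A v), i.e. the operator matrix [[0, −I], [c²A, bA]]. Suppose there is λ₁ > 0 such that every element of the spectrum σ(A) is a real number ≥ λ₁ (i.e. σ(A) ⊆ [λ₁, ∞)). Set λ₀ := min(b·λ₁/2, c²/b). Then every λ ∈ ℂ with Re λ < λ₀ satisfies λ ∉ σ(𝒜); in particular the spectral bound of −𝒜 is at most −λ₀ < 0. -/

import Mathlib

lemma scalar_ne (b c lam1 : ℝ) (hb : 0 < b) (hc : 0 < c) (hlam1 : 0 < lam1)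
    (lam : ℂ) (hre : lam.re < min (b * lam1 / 2) (c ^ 2 / b)) (mu : ℝ) (hmu : lam1 ≤ mu) :
    lam ^ 2 - (lam * (b : ℂ) - (c : ℂ) ^ 2) * (mu : ℂ) ≠ 0 := by
  intro h
  have h1 : lam.re < b * lam1 / 2 := lt_of_lt_of_le hre (min_le_left _ _)
  have h2 : lam.re < c ^ 2 / b := lt_of_lt_of_le hre (min_le_right _ _)
  have hx : b * lam.re < c ^ 2 := by
    rw [lt_div_iff₀ hb] at h2; nlinarith [h2]
  have him : (lam ^ 2 - (lam * (b : ℂ) - (c : ℂ) ^ 2) * (mu : ℂ)).im = 0 := by rw [h]; simp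
  have hre' : (lam ^ 2 - (lam * (b : ℂ) - (c : ℂ) ^ 2) * (mu : ℂ)).re = 0 := by rw [h]; simp
  set x := lam.re
  set y := lam.im
  simp [Complex.ext_iff, pow_two, Complex.mul_re, Complex.mul_im, Complex.sub_re,
    Complex.sub_im, Complex.ofReal_re, Complex.ofReal_im] at him hre'
  have hy : y * (2 * x - b * mu) = 0 := by nlinarith [him]
  rcases mul_eq_zero.mp hy with hy0 | hcase
  · have hμpos : 0 < mu := lt_of_lt_of_le hlam1 hmu
    nlinarith [hre', mul_pos hμpos (by nlinarith : (0:ℝ) < c^2 - b * x)]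
  · nlinarith [hmu, hb.le]

theorem westervelt_block_spectral_bound
    {E : Type*} [NormedAddCommGroup E] [NormedSpace ℂ E]
    (A : E →L[ℂ] E) (b c lam1 : ℝ) (hb : 0 < b) (hc : 0 < c) (hlam1 : 0 < lam1)
    (hspec : ∀ z ∈ spectrum ℂ A, z.im = 0 ∧ lam1 ≤ z.re) :
    let 𝒜 : (E × E) →L[ℂ] (E × E) :=
      (-(ContinuousLinearMap.snd ℂ E E)).prod
        (((c : ℂ) ^ 2 • A).comp (ContinuousLinearMap.fst ℂ E E) +
          ((b : ℂ) • A).comp (ContinuousLinearMap.snd ℂ E E))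
    let lam0 : ℝ := min (b * lam1 / 2) (c ^ 2 / b)
    (∀ lam : ℂ, lam.re < lam0 → lam ∉ spectrum ℂ 𝒜) ∧
      (∀ z ∈ spectrum ℂ (-𝒜), z.re ≤ -lam0) ∧ -lam0 < 0 := by
  intro 𝒜 lam0
  have hlam0pos : 0 < lam0 := lt_min (by positivity) (by positivity)
  have key : ∀ lam : ℂ, lam.re < lam0 → lam ∉ spectrum ℂ 𝒜 := by
    intro lam hlam
    rw [spectrum.notMem_iff]
    have hα : lam * (b : ℂ) - (c : ℂ) ^ 2 ≠ 0 := by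
      intro h0
      have hb' : (b : ℂ) ≠ 0 := by exact_mod_cast hb.ne'
      have hclam : lam = ((c ^ 2 / b : ℝ) : ℂ) := by
        push_cast
        field_simp
        linear_combination h0
      have hre : lam.re = c ^ 2 / b := by rw [hclam, Complex.ofReal_re]
      have hlt := lt_of_lt_of_le hlam (min_le_right _ _)
      rw [hre] at hlt
      exact lt_irrefl _ hlt
    set α : ℂ := lam * (b : ℂ) - (c : ℂ) ^ 2 with hαdef
    have hw : lam ^ 2 / α ∉ spectrum ℂ A := by
      intro hmem
      obtain ⟨him, hrew⟩ := hspec _ hmem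
      have hwr : lam ^ 2 / α = (((lam ^ 2 / α).re : ℝ) : ℂ) :=
        Complex.ext (by simp) (by simp [him])
      apply scalar_ne b c lam1 hb hc hlam1 lam hlam (lam ^ 2 / α).re hrew
      rw [← hαdef, ← hwr]
      field_simp
      ring
    have hwu : IsUnit (algebraMap ℂ (E →L[ℂ] E) (lam ^ 2 / α) - A) :=
      spectrum.notMem_iff.mp hw
    have hαu : IsUnit (algebraMap ℂ (E →L[ℂ] E) α) := (isUnit_iff_ne_zero.mpr hα).map _
    have hS : IsUnit (algebraMap ℂ (E →L[ℂ] E) (lam ^ 2) - α • A) := by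
      have hfac : algebraMap ℂ (E →L[ℂ] E) (lam ^ 2) - α • A =
          algebraMap ℂ (E →L[ℂ] E) α * (algebraMap ℂ (E →L[ℂ] E) (lam ^ 2 / α) - A) := by
        rw [mul_sub, ← map_mul, ← Algebra.smul_def, mul_div_cancel₀ _ hα]
      rw [hfac]
      exact hαu.mul hwu
    obtain ⟨SU, hSU⟩ := hS
    set R : E →L[ℂ] E := ↑SU⁻¹ with hRdef
    have hSR : ∀ x : E, lam ^ 2 • R x - α • A (R x) = x := by
      intro x
      have h1 : ((↑SU * ↑SU⁻¹ : E →L[ℂ] E)) x = x := by rw [SU.mul_inv]; simp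
      rw [hSU] at h1
      simpa [ContinuousLinearMap.mul_apply, Algebra.algebraMap_eq_smul_one] using h1
    have hRS : ∀ x : E, R (lam ^ 2 • x - α • A x) = x := by
      intro x
      have h1 : ((↑SU⁻¹ * ↑SU : E →L[ℂ] E)) x = x := by rw [SU.inv_mul]; simp
      rw [hSU] at h1
      simpa [ContinuousLinearMap.mul_apply, Algebra.algebraMap_eq_smul_one] using h1
    set L1 : (E × E) →L[ℂ] E :=
      lam • (ContinuousLinearMap.fst ℂ E E) - ((b : ℂ) • A).comp (ContinuousLinearMap.fst ℂ E E)
        - ContinuousLinearMap.snd ℂ E E with hL1def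
    set M : (E × E) →L[ℂ] (E × E) :=
      (R.comp L1).prod (ContinuousLinearMap.fst ℂ E E - lam • (R.comp L1)) with hMdef
    set T : (E × E) →L[ℂ] (E × E) := algebraMap ℂ ((E × E) →L[ℂ] (E × E)) lam - 𝒜 with hTdef
    have hTapp : ∀ x : E × E,
        T x = (lam • x.1 + x.2, lam • x.2 - ((c : ℂ) ^ 2 • A x.1 + (b : ℂ) • A x.2)) := by
      intro x
      simp [hTdef, 𝒜, Algebra.algebraMap_eq_smul_one, Prod.ext_iff, sub_neg_eq_add]
    have hMapp : ∀ x : E × E,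
        M x = (R (lam • x.1 - (b : ℂ) • A x.1 - x.2),
          x.1 - lam • R (lam • x.1 - (b : ℂ) • A x.1 - x.2)) := by
      intro x
      simp [hMdef, hL1def]
    have hTM : T * M = 1 := by
      refine ContinuousLinearMap.ext fun x => ?_
      rw [ContinuousLinearMap.mul_apply, hMapp x, hTapp _]
      set u : E := R (lam • x.1 - (b : ℂ) • A x.1 - x.2) with hu
      have hSu : lam ^ 2 • u - α • A u = lam • x.1 - (b : ℂ) • A x.1 - x.2 := hSR _
      rw [hαdef] at hSu
      refine Prod.ext ?_ ?_
      · show lam • u + (x.1 - lam • u) = x.1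
        module
      · show lam • (x.1 - lam • u) - ((c : ℂ) ^ 2 • A u + (b : ℂ) • A (x.1 - lam • u)) = x.2
        rw [map_sub, map_smul]
        have : lam • x.1 - (b : ℂ) • A x.1 - (lam ^ 2 • u - (lam * ↑b - ↑c ^ 2) • A u) = x.2 := by
          rw [hSu]; module
        rw [← this]
        module
    have hMT : M * T = 1 := by
      refine ContinuousLinearMap.ext fun x => ?_
      rw [ContinuousLinearMap.mul_apply, hTapp x, hMapp _]
      set f : E := lam • x.1 + x.2 with hf
      set g : E := lam • x.2 - ((c : ℂ) ^ 2 • A x.1 + (b : ℂ) • A x.2) with hg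
      have harg : lam • f - (b : ℂ) • A f - g = lam ^ 2 • x.1 - α • A x.1 := by
        rw [hf, hg, hαdef, map_add, map_smul]
        module
      refine Prod.ext ?_ ?_
      · show R (lam • f - (b : ℂ) • A f - g) = x.1
        rw [harg]
        exact hRS x.1
      · show f - lam • R (lam • f - (b : ℂ) • A f - g) = x.2
        rw [harg, hRS x.1, hf]
        module
    exact ⟨⟨T, M, hTM, hMT⟩, rfl⟩
  refine ⟨key, ?_, by linarith⟩
  intro z hz
  by_contra h
  push_neg at h
  rw [← spectrum.neg_eq] at hz
  have hmem : -z ∈ spectrum ℂ 𝒜 := Set.mem_neg.mp hz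
  have : (-z).re < lam0 := by simp; linarith
  exact key (-z) this hmem
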